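/- Let q be a prime power, k ≥ 2 an integer, t = ⌊(k+2)/4⌋, and let CD(k,q) be a connected component of D(k,q), of order v and with e edges. Then, as real numbers, e ≥ 2^{−1−1/(k−t+1)} · v^{1+1/(k−t+1)}. -/

import Mathlib

/-- Extend a vector `Fin k → F` to `ℕ → F` by zeros. -/
def extD {F : Type} [Zero F] {k : ℕ} (v : Fin k → F) : ℕ → F :=
  fun m => if h : m < k then v ⟨m, h⟩ else 0

/-- Right-hand side of the `m`-th incidence equation of `D(k,q)`
(coordinates are numbered from `0`, so the `m`-th equation concerns the
coordinate with index `m`). -/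
def rhsD {F : Type} [Mul F] (p l : ℕ → F) : ℕ → F
  | 1 => l 0 * p 0
  | 2 => l 1 * p 0
  | m => if m % 4 = 0 ∨ m % 4 = 3 then l 0 * p (m - 2) else l (m - 2) * p 0

/-- The incidence relation between a point `p` and a line `l`:
the first `k - 1` incidence equations hold. -/
def incD {F : Type} [Field F] (k : ℕ) (p l : Fin k → F) : Prop :=
  ∀ m, 1 ≤ m → m < k → extD l m - extD p m = rhsD (extD p) (extD l) m

/-- The bipartite graph `D(k,q)`; vertices are points (`Sum.inl`) and
lines (`Sum.inr`), both copies of `GF(q)^k`. -/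
def DGraph (k : ℕ) (F : Type) [Field F] :
    SimpleGraph ((Fin k → F) ⊕ (Fin k → F)) where
  Adj x y :=
    match x, y with
    | Sum.inl p, Sum.inr l => incD k p l
    | Sum.inr l, Sum.inl p => incD k p l
    | Sum.inl _, Sum.inl _ => False
    | Sum.inr _, Sum.inr _ => False
  symm := ⟨by rintro (p | l) (p' | l') h <;> exact h⟩
  loopless := ⟨by rintro (p | l) h <;> exact h⟩

set_option linter.unusedSectionVars false

/-- index of `u_{ii}` (`i ≥ 1`); `cI 0 = 0` is a junk/convention value. -/
def cI : ℕ → ℕ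
  | 0 => 0
  | 1 => 1
  | (i+2) => 4*i+4

/-- index of `u'_{ii}` (`i ≥ 1`, with `u'_{11} = u_{11}`). -/
def dI : ℕ → ℕ
  | 0 => 0
  | 1 => 1
  | (i+2) => 4*i+5

/-- index of `u_{i,i+1}` (`i ≥ 1`); `eI 0 = 0` is a convention. -/
def eI : ℕ → ℕ
  | 0 => 0
  | 1 => 2
  | (i+2) => 4*i+6

/-- index of `u_{i,i-1}` (`i ≥ 2`); `fI 1 = 0` is a convention. -/
def fI : ℕ → ℕ
  | 0 => 0
  | 1 => 0
  | 2 => 3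
  | (i+3) => 4*i+7

/-- invariant `a_{s+2}` of a point. -/
def Ap {F : Type} [Field F] (s : ℕ) (P : ℕ → F) : F :=
  P (4*s+4) - P (4*s+5) - P 0 * P (4*s+3)
    + (∑ j ∈ Finset.range (s+1), P (cI (j+1)) * P (dI (s+1-j)))
    - (∑ j ∈ Finset.range s, P (eI (j+1)) * P (fI (s+1-j)))

/-- invariant `a_{s+2}` of a line. -/
def Al {F : Type} [Field F] (s : ℕ) (L : ℕ → F) : F :=
  L (4*s+4) - L (4*s+5) - L 0 * L (4*s+2)
    + (∑ j ∈ Finset.range (s+1), L (cI (j+1)) * L (dI (s+1-j)))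
    - (∑ j ∈ Finset.range s, L (eI (j+1)) * L (fI (s+1-j)))

section Inv
variable {F : Type} [Field F] {k : ℕ} {p l : Fin k → F}

/-- decoded incidence equations -/
lemma eq_gen (h : incD k p l) {m : ℕ} (h1 : 1 ≤ m) (h2 : m < k) :
    extD l m = extD p m + rhsD (extD p) (extD l) m := by
  linear_combination h m h1 h2

lemma eq1 (h : incD k p l) (h2 : 1 < k) :
    extD l 1 = extD p 1 + extD l 0 * extD p 0 := eq_gen h le_rfl h2

lemma eq2 (h : incD k p l) (h2 : 2 < k) :
    extD l 2 = extD p 2 + extD l 1 * extD p 0 := eq_gen h (by norm_num) h2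

lemma eqm03 (h : incD k p l) {m : ℕ} (h3 : 3 ≤ m) (h2 : m < k)
    (hm : m % 4 = 0 ∨ m % 4 = 3) :
    extD l m = extD p m + extD l 0 * extD p (m - 2) := by
  have := eq_gen h (by omega) h2
  rw [this]
  congr 1
  match m, h3 with
  | (n+3), _ => simp only [rhsD, if_pos hm]

lemma eqm12 (h : incD k p l) {m : ℕ} (h3 : 3 ≤ m) (h2 : m < k)
    (hm : ¬ (m % 4 = 0 ∨ m % 4 = 3)) :
    extD l m = extD p m + extD l (m - 2) * extD p 0 := by
  have := eq_gen h (by omega) h2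
  rw [this]
  congr 1
  match m, h3 with
  | (n+3), _ => simp only [rhsD, if_neg hm]
end Inv

lemma cI_eq (s : ℕ) : cI (s+2) = 4*s+4 := rfl
lemma dI_eq (s : ℕ) : dI (s+2) = 4*s+5 := rfl
lemma eI_eq (s : ℕ) : eI (s+2) = 4*s+6 := rfl
lemma fI_eq (s : ℕ) : fI (s+2) = 4*s+3 := by
  cases s with
  | zero => rfl
  | succ n => show fI (n+3) = _ ; simp [fI]; omega

lemma eI_succ (s : ℕ) : eI (s+1) = 4*s+2 := by
  cases s with
  | zero => rfl
  | succ n => rw [eI_eq]; omega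

section Inv
variable {F : Type} [Field F] {k : ℕ} {p l : Fin k → F}

lemma lcEq (h : incD k p l) {s : ℕ} (hsk : 4*s+5 < k) {j : ℕ} (hj : j ≤ s) :
    extD l (cI (j+1)) = extD p (cI (j+1)) + extD l 0 * extD p (eI j) := by
  cases j with
  | zero => exact eq1 h (by omega)
  | succ n =>
    rw [cI_eq, eI_succ]
    have h1 : (4*n+4) - 2 = 4*n+2 := by omega
    have := eqm03 h (m := 4*n+4) (by omega) (by omega) (by omega)
    rwa [h1] at this

lemma ldEq (h : incD k p l) {s : ℕ} (hsk : 4*s+5 < k) {i : ℕ} (h1 : 1 ≤ i)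
    (h2 : i ≤ s+1) : extD l (dI i) = extD p (dI i) + extD p 0 * extD l (fI i) := by
  match i, h1 with
  | 1, _ => show extD l 1 = extD p 1 + extD p 0 * extD l 0
            rw [eq1 h (by omega)]; ring
  | (n+2), _ =>
    rw [dI_eq]
    have h1 : (4*n+5) - 2 = 4*n+3 := by omega
    have := eqm12 h (m := 4*n+5) (by omega) (by omega) (by omega)
    rw [h1] at this
    rw [this, ← fI_eq]; ring

lemma leEq (h : incD k p l) {s : ℕ} (hsk : 4*s+5 < k) {i : ℕ} (h1 : 1 ≤ i)
    (h2 : i ≤ s+1) : extD l (eI i) = extD p (eI i) + extD p 0 * extD l (cI i) := by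
  match i, h1 with
  | 1, _ => show extD l 2 = extD p 2 + extD p 0 * extD l 1
            rw [eq2 h (by omega)]; ring
  | (n+2), _ =>
    rw [eI_eq]
    have h1 : (4*n+6) - 2 = 4*n+4 := by omega
    have := eqm12 h (m := 4*n+6) (by omega) (by omega) (by omega)
    rw [h1] at this
    rw [this, ← cI_eq]; ring

lemma lfEq (h : incD k p l) {s : ℕ} (hsk : 4*s+5 < k) {i : ℕ} (h1 : 2 ≤ i)
    (h2 : i ≤ s+2) : extD l (fI i) = extD p (fI i) + extD l 0 * extD p (dI (i-1)) := by
  match i, h1 with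
  | (n+2), _ =>
    rw [fI_eq]
    have h1 : (4*n+3) - 2 = 4*n+1 := by omega
    have := eqm03 h (m := 4*n+3) (by omega) (by omega) (by omega)
    rw [h1] at this
    rw [this]
    have hd : dI (n+2-1) = 4*n+1 := by
      cases n with
      | zero => rfl
      | succ m => show dI (m+2) = _ ; rw [dI_eq]; omega
    rw [hd]

theorem inv_eq (h : incD k p l) (s : ℕ) (hsk : 4*s+5 < k) :
    Al s (extD l) = Ap s (extD p) := by
  have L : True := trivial
  have claim1 : ∀ j ∈ Finset.range (s+1),
      extD l (cI (j+1)) * extD l (dI (s+1-j)) =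
        extD p (cI (j+1)) * extD p (dI (s+1-j)) + extD l 0 * (extD p (eI j) * extD p (dI (s+1-j)))
          + extD p 0 * (extD l (cI (j+1)) * extD l (fI (s+1-j))) := by
    intro j hj
    have hj' : j ≤ s := by simpa using Nat.lt_succ_iff.mp (Finset.mem_range.mp hj)
    rw [lcEq h hsk hj', ldEq h hsk (by omega) (by omega)]
    ring
  have claim2 : ∀ j ∈ Finset.range s,
      extD l (eI (j+1)) * extD l (fI (s+1-j)) =
        extD p (eI (j+1)) * extD p (fI (s+1-j)) + extD l 0 * (extD p (eI (j+1)) * extD p (dI (s-j)))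
          + extD p 0 * (extD l (cI (j+1)) * extD l (fI (s+1-j))) := by
    intro j hj
    have hj' : j < s := Finset.mem_range.mp hj
    have hd : (s+1-j) - 1 = s - j := by omega
    rw [leEq h hsk (by omega) (by omega), lfEq h hsk (by omega) (by omega), hd]
    ring
  have hS1 : (∑ j ∈ Finset.range (s+1), extD l (cI (j+1)) * extD l (dI (s+1-j))) =
      (∑ j ∈ Finset.range (s+1), extD p (cI (j+1)) * extD p (dI (s+1-j)))
      + extD l 0 * (∑ j ∈ Finset.range (s+1), extD p (eI j) * extD p (dI (s+1-j)))
      + extD p 0 * (∑ j ∈ Finset.range (s+1), extD l (cI (j+1)) * extD l (fI (s+1-j))) := by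
    rw [Finset.sum_congr rfl claim1, Finset.sum_add_distrib, Finset.sum_add_distrib,
      Finset.mul_sum, Finset.mul_sum]
  have hS2 : (∑ j ∈ Finset.range s, extD l (eI (j+1)) * extD l (fI (s+1-j))) =
      (∑ j ∈ Finset.range s, extD p (eI (j+1)) * extD p (fI (s+1-j)))
      + extD l 0 * (∑ j ∈ Finset.range s, extD p (eI (j+1)) * extD p (dI (s-j)))
      + extD p 0 * (∑ j ∈ Finset.range s, extD l (cI (j+1)) * extD l (fI (s+1-j))) := by
    rw [Finset.sum_congr rfl claim2, Finset.sum_add_distrib, Finset.sum_add_distrib,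
      Finset.mul_sum, Finset.mul_sum]
  have hz : (∑ j ∈ Finset.range (s+1), extD p (eI j) * extD p (dI (s+1-j))) =
      extD p 0 * extD p (dI (s+1)) + (∑ j ∈ Finset.range s, extD p (eI (j+1)) * extD p (dI (s-j))) := by
    rw [Finset.sum_range_succ']
    rw [Finset.sum_congr rfl (fun j hj => by
      have : s+1-(j+1) = s-j := by omega
      rw [this])]
    rw [add_comm]
    rfl
  have hw : (∑ j ∈ Finset.range (s+1), extD l (cI (j+1)) * extD l (fI (s+1-j))) =
      extD l 0 * extD l (cI (s+1)) + (∑ j ∈ Finset.range s, extD l (cI (j+1)) * extD l (fI (s+1-j))) := by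
    rw [Finset.sum_range_succ, add_comm]
    congr 1
    show extD l (cI (s+1)) * extD l (fI (s+1-s)) = extD l 0 * extD l (cI (s+1))
    have : s+1-s = 1 := by omega
    rw [this]
    show extD l (cI (s+1)) * extD l 0 = _
    ring
  have hA : extD l (4*s+4) = extD p (4*s+4) + extD l 0 * extD p (4*s+2) := by
    have h1 : (4*s+4) - 2 = 4*s+2 := by omega
    have := eqm03 h (m := 4*s+4) (by omega) (by omega) (by omega)
    rwa [h1] at this
  have hB : extD l (4*s+5) = extD p (4*s+5) + extD l (4*s+3) * extD p 0 := by
    have h1 : (4*s+5) - 2 = 4*s+3 := by omega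
    have := eqm12 h (m := 4*s+5) (by omega) (by omega) (by omega)
    rwa [h1] at this
  have hC : extD l (4*s+3) = extD p (4*s+3) + extD l 0 * extD p (dI (s+1)) := by
    have := lfEq h hsk (i := s+2) (by omega) (by omega)
    rw [fI_eq] at this
    have h1 : s+2-1 = s+1 := by omega
    rwa [h1] at this
  have hD : extD l (4*s+2) = extD p (4*s+2) + extD p 0 * extD l (cI (s+1)) := by
    have := leEq h hsk (i := s+1) (by omega) (by omega)
    rwa [eI_succ] at this
  rw [Al, Ap, hS1, hS2, hz, hw, hA, hB, hC, hD]
  ring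
end Inv

/-! ### Part B: solving for the unique neighbour with given free coordinate -/

def solveLine {F : Type} [Field F] (P : ℕ → F) (a : F) : ℕ → F
  | 0 => a
  | 1 => P 1 + solveLine P a 0 * P 0
  | 2 => P 2 + solveLine P a 1 * P 0
  | (m+3) => P (m+3) + if (m+3) % 4 = 0 ∨ (m+3) % 4 = 3
      then solveLine P a 0 * P (m+1) else solveLine P a (m+1) * P 0

def solvePoint {F : Type} [Field F] (L : ℕ → F) (a : F) : ℕ → F
  | 0 => a
  | 1 => L 1 - L 0 * solvePoint L a 0
  | 2 => L 2 - L 1 * solvePoint L a 0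
  | (m+3) => L (m+3) - if (m+3) % 4 = 0 ∨ (m+3) % 4 = 3
      then L 0 * solvePoint L a (m+1) else L (m+1) * solvePoint L a 0

section Solve
variable {F : Type} [Field F]

lemma rhsD_congrL {P L L' : ℕ → F} {m : ℕ} (hm : 1 ≤ m) (h : ∀ j < m, L j = L' j) :
    rhsD P L m = rhsD P L' m := by
  match m, hm with
  | 1, _ => simp only [rhsD, h 0 (by omega)]
  | 2, _ => simp only [rhsD, h 1 (by omega)]
  | (n+3), _ =>
    simp only [rhsD, h 0 (by omega), h (n+3-2) (by omega)]

lemma rhsD_congrP {P P' L : ℕ → F} {m : ℕ} (hm : 1 ≤ m) (h : ∀ j < m, P j = P' j) :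
    rhsD P L m = rhsD P' L m := by
  match m, hm with
  | 1, _ => simp only [rhsD, h 0 (by omega)]
  | 2, _ => simp only [rhsD, h 0 (by omega)]
  | (n+3), _ =>
    simp only [rhsD, h 0 (by omega), h (n+3-2) (by omega)]

lemma solveLine_spec (P : ℕ → F) (a : F) {m : ℕ} (hm : 1 ≤ m) :
    solveLine P a m = P m + rhsD P (solveLine P a) m := by
  match m, hm with
  | 1, _ => rw [solveLine]; rfl
  | 2, _ => rw [solveLine]; rfl
  | (n+3), _ => rw [solveLine]; rfl

lemma solvePoint_spec (L : ℕ → F) (a : F) {m : ℕ} (hm : 1 ≤ m) :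
    solvePoint L a m = L m - rhsD (solvePoint L a) L m := by
  match m, hm with
  | 1, _ => rw [solvePoint]; rfl
  | 2, _ => rw [solvePoint]; rfl
  | (n+3), _ => rw [solvePoint]; rfl

variable {k : ℕ} (hk : 2 ≤ k)

lemma extD_lt {v : Fin k → F} {m : ℕ} (h : m < k) : extD v m = v ⟨m, h⟩ := dif_pos h

/-- the line through `p` with free coordinate `a` -/
def lineOf (p : Fin k → F) (a : F) : Fin k → F := fun i => solveLine (extD p) a i

/-- the point on `l` with free coordinate `a` -/
def pointOf (l : Fin k → F) (a : F) : Fin k → F := fun i => solvePoint (extD l) a i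

lemma extD_lineOf (p : Fin k → F) (a : F) {m : ℕ} (h : m < k) :
    extD (lineOf p a) m = solveLine (extD p) a m := by
  rw [extD_lt h]; rfl

lemma extD_pointOf (l : Fin k → F) (a : F) {m : ℕ} (h : m < k) :
    extD (pointOf l a) m = solvePoint (extD l) a m := by
  rw [extD_lt h]; rfl

lemma lineOf_adj (p : Fin k → F) (a : F) : incD k p (lineOf p a) := by
  intro m h1 h2
  rw [extD_lineOf p a h2, solveLine_spec _ _ h1,
    rhsD_congrL h1 (fun j hj => (extD_lineOf p a (lt_trans hj h2)).symm)]
  ring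

lemma pointOf_adj (l : Fin k → F) (a : F) : incD k (pointOf l a) l := by
  intro m h1 h2
  rw [extD_pointOf l a h2, solvePoint_spec _ _ h1,
    rhsD_congrP h1 (fun j hj => (extD_pointOf l a (lt_trans hj h2)).symm)]
  ring

lemma lineOf_unique {p l : Fin k → F} (h : incD k p l) :
    ∀ m < k, extD l m = solveLine (extD p) (extD l 0) m := by
  intro m
  induction m using Nat.strong_induction_on with
  | _ m ih =>
    intro hmk
    match m with
    | 0 => rw [solveLine]
    | (n+1) =>
      rw [eq_gen h (by omega) hmk, solveLine_spec _ _ (by omega : 1 ≤ n+1),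
        rhsD_congrL (by omega : 1 ≤ n+1) (fun j hj => ih j hj (by omega))]

lemma pointOf_unique {p l : Fin k → F} (h : incD k p l) :
    ∀ m < k, extD p m = solvePoint (extD l) (extD p 0) m := by
  intro m
  induction m using Nat.strong_induction_on with
  | _ m ih =>
    intro hmk
    match m with
    | 0 => rw [solvePoint]
    | (n+1) =>
      have := eq_gen h (by omega : 1 ≤ n+1) hmk
      have hthis : extD p (n+1) = extD l (n+1) - rhsD (extD p) (extD l) (n+1) := by
        linear_combination -this
      rw [hthis, solvePoint_spec _ _ (by omega : 1 ≤ n+1),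
        rhsD_congrP (by omega : 1 ≤ n+1) (fun j hj => (ih j hj (by omega)).symm)]

/-- lines adjacent to a point, parametrised by the free coordinate -/
def lineEquiv (hk : 0 < k) (p : Fin k → F) : {l : Fin k → F // incD k p l} ≃ F where
  toFun l := extD l.val 0
  invFun a := ⟨lineOf p a, lineOf_adj p a⟩
  left_inv := by
    rintro ⟨l, hl⟩
    ext i
    have := lineOf_unique hl i.val i.isLt
    rw [extD_lt i.isLt] at this
    simp only [lineOf]
    rw [← this]
  right_inv := by
    intro a
    show extD (lineOf p a) 0 = a
    rw [extD_lt hk]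
    show solveLine (extD p) a 0 = a
    rw [solveLine]

def pointEquiv (hk : 0 < k) (l : Fin k → F) : {p : Fin k → F // incD k p l} ≃ F where
  toFun p := extD p.val 0
  invFun a := ⟨pointOf l a, pointOf_adj l a⟩
  left_inv := by
    rintro ⟨p, hp⟩
    ext i
    have := pointOf_unique hp i.val i.isLt
    rw [extD_lt i.isLt] at this
    simp only [pointOf]
    rw [← this]
  right_inv := by
    intro a
    show extD (pointOf l a) 0 = a
    rw [extD_lt hk]
    show solvePoint (extD l) a 0 = a
    rw [solvePoint]

end Solve

/-! ### Part C: graph lemmas -/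

section Graph
open scoped Classical
variable {F : Type} [Field F] [Fintype F] {k : ℕ}

lemma adj_supp {C : (DGraph k F).ConnectedComponent} {x y : (Fin k → F) ⊕ (Fin k → F)}
    (hx : x ∈ C.supp) (hxy : (DGraph k F).Adj x y) : y ∈ C.supp := by
  rw [SimpleGraph.ConnectedComponent.mem_supp_iff] at *
  rw [← hx]
  exact SimpleGraph.ConnectedComponent.sound hxy.symm.reachable

noncomputable def indNbhd (C : (DGraph k F).ConnectedComponent) (x : C.supp) :
    ((DGraph k F).induce C.supp).neighborSet x ≃ (DGraph k F).neighborSet x.val where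
  toFun y := ⟨y.val.val, y.prop⟩
  invFun z := ⟨⟨z.val, adj_supp x.prop z.prop⟩, z.prop⟩
  left_inv _ := rfl
  right_inv _ := rfl

noncomputable def nbhdEquivInl (hk : 2 ≤ k) (p : Fin k → F) :
    (DGraph k F).neighborSet (Sum.inl p) ≃ F := by
  refine Equiv.trans ?_ (lineEquiv (F := F) (by omega) p)
  exact {
    toFun := fun y => match y with
      | ⟨Sum.inr l, h⟩ => ⟨l, h⟩
      | ⟨Sum.inl _, h⟩ => False.elim h
    invFun := fun l => ⟨Sum.inr l.val, l.prop⟩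
    left_inv := by rintro ⟨(q | l), h⟩
                   · exact False.elim h
                   · rfl
    right_inv := fun _ => rfl }

noncomputable def nbhdEquivInr (hk : 2 ≤ k) (l : Fin k → F) :
    (DGraph k F).neighborSet (Sum.inr l) ≃ F := by
  refine Equiv.trans ?_ (pointEquiv (F := F) (by omega) l)
  exact {
    toFun := fun y => match y with
      | ⟨Sum.inl p, h⟩ => ⟨p, h⟩
      | ⟨Sum.inr _, h⟩ => False.elim h
    invFun := fun p => ⟨Sum.inl p.val, p.prop⟩
    left_inv := by rintro ⟨(q | l), h⟩
                   · rfl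
                   · exact False.elim h
    right_inv := fun _ => rfl }

lemma card_nbhd (hk : 2 ≤ k) (x : (Fin k → F) ⊕ (Fin k → F)) :
    Fintype.card ((DGraph k F).neighborSet x) = Fintype.card F := by
  cases x with
  | inl p => exact Fintype.card_congr (nbhdEquivInl hk p)
  | inr l => exact Fintype.card_congr (nbhdEquivInr hk l)

lemma handshake (hk : 2 ≤ k) (C : (DGraph k F).ConnectedComponent) :
    2 * Nat.card ((DGraph k F).induce C.supp).edgeSet
      = Fintype.card F * Nat.card C.supp := by
  have h1 : ∑ x : C.supp, ((DGraph k F).induce C.supp).degree x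
      = 2 * ((DGraph k F).induce C.supp).edgeFinset.card :=
    SimpleGraph.sum_degrees_eq_twice_card_edges _
  have h2 : ∀ x : C.supp, ((DGraph k F).induce C.supp).degree x = Fintype.card F := by
    intro x
    rw [← SimpleGraph.card_neighborSet_eq_degree]
    rw [Fintype.card_congr (indNbhd C x)]
    exact card_nbhd hk x.val
  rw [Finset.sum_congr rfl (fun x _ => h2 x), Finset.sum_const] at h1
  simp only [smul_eq_mul, Finset.card_univ] at h1
  rw [Nat.card_eq_fintype_card, ← SimpleGraph.edgeFinset_card, ← h1,
    Nat.card_eq_fintype_card]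
  ring

end Graph

/-! ### Part C': invariant constancy and component size -/

def PhiD (k : ℕ) (F : Type) [Field F] : ((Fin k → F) ⊕ (Fin k → F)) → ℕ → F :=
  Sum.elim (fun p s => Ap s (extD p)) (fun l s => Al s (extD l))

section PhiSec
set_option linter.unusedSectionVars false
variable {F : Type} [Field F] {k : ℕ}

lemma phi_adj {x y : (Fin k → F) ⊕ (Fin k → F)} (hxy : (DGraph k F).Adj x y)
    {s : ℕ} (hs : 4*s+5 < k) : PhiD k F x s = PhiD k F y s := by
  match x, y with
  | Sum.inl p, Sum.inr l => exact (inv_eq hxy s hs).symm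
  | Sum.inr l, Sum.inl p => exact (inv_eq hxy s hs)
  | Sum.inl _, Sum.inl _ => exact False.elim hxy
  | Sum.inr _, Sum.inr _ => exact False.elim hxy

lemma phi_walk {x y : (Fin k → F) ⊕ (Fin k → F)} (w : (DGraph k F).Walk x y)
    {s : ℕ} (hs : 4*s+5 < k) : PhiD k F x s = PhiD k F y s := by
  induction w with
  | nil => rfl
  | cons a _ ih => exact (phi_adj a hs).trans ih

lemma phi_supp {C : (DGraph k F).ConnectedComponent}
    {x y : (Fin k → F) ⊕ (Fin k → F)} (hx : x ∈ C.supp) (hy : y ∈ C.supp)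
    {s : ℕ} (hs : 4*s+5 < k) : PhiD k F x s = PhiD k F y s := by
  rw [SimpleGraph.ConnectedComponent.mem_supp_iff] at hx hy
  obtain ⟨w⟩ := SimpleGraph.ConnectedComponent.exact (hx.trans hy.symm)
  exact phi_walk w hs

/-! index bounds -/
lemma cI_le (j : ℕ) : cI (j+1) ≤ 4*j+1 := by
  cases j with
  | zero => simp [cI]
  | succ n => rw [cI_eq]; omega

lemma dI_le (j : ℕ) : dI (j+1) ≤ 4*j+1 := by
  cases j with
  | zero => simp [dI]
  | succ n => rw [dI_eq]; omega

lemma eI_le (j : ℕ) : eI (j+1) ≤ 4*j+2 := by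
  cases j with
  | zero => simp [eI]
  | succ n => rw [eI_eq]; omega

lemma fI_le (j : ℕ) : fI j ≤ 4*j := by
  match j with
  | 0 => simp [fI]
  | 1 => simp [fI]
  | (n+2) => rw [fI_eq]; omega

lemma Ap_congr {P P' : ℕ → F} (s : ℕ) (h : ∀ j < 4*s+5, P j = P' j) :
    Ap s P + P (4*s+5) = Ap s P' + P' (4*s+5) := by
  have e1 : P (4*s+4) = P' (4*s+4) := h _ (by omega)
  have e2 : P 0 = P' 0 := h _ (by omega)
  have e3 : P (4*s+3) = P' (4*s+3) := h _ (by omega)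
  have eS1 : (∑ j ∈ Finset.range (s+1), P (cI (j+1)) * P (dI (s+1-j)))
      = ∑ j ∈ Finset.range (s+1), P' (cI (j+1)) * P' (dI (s+1-j)) := by
    refine Finset.sum_congr rfl (fun j hj => ?_)
    have hj' : j < s+1 := Finset.mem_range.mp hj
    have e : s+1-j = (s-j)+1 := by omega
    rw [h (cI (j+1)) (lt_of_le_of_lt (cI_le j) (by omega)), e,
      h (dI ((s-j)+1)) (lt_of_le_of_lt (dI_le (s-j)) (by omega))]
  have eS2 : (∑ j ∈ Finset.range s, P (eI (j+1)) * P (fI (s+1-j)))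
      = ∑ j ∈ Finset.range s, P' (eI (j+1)) * P' (fI (s+1-j)) := by
    refine Finset.sum_congr rfl (fun j hj => ?_)
    have hj' : j < s := Finset.mem_range.mp hj
    rw [h (eI (j+1)) (lt_of_le_of_lt (eI_le j) (by omega)),
      h (fI (s+1-j)) (lt_of_le_of_lt (fI_le (s+1-j)) (by omega))]
  rw [Ap, Ap, e1, e2, e3, eS1, eS2]
  ring

lemma Al_congr {P P' : ℕ → F} (s : ℕ) (h : ∀ j < 4*s+5, P j = P' j) :
    Al s P + P (4*s+5) = Al s P' + P' (4*s+5) := by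
  have e1 : P (4*s+4) = P' (4*s+4) := h _ (by omega)
  have e2 : P 0 = P' 0 := h _ (by omega)
  have e3 : P (4*s+2) = P' (4*s+2) := h _ (by omega)
  have eS1 : (∑ j ∈ Finset.range (s+1), P (cI (j+1)) * P (dI (s+1-j)))
      = ∑ j ∈ Finset.range (s+1), P' (cI (j+1)) * P' (dI (s+1-j)) := by
    refine Finset.sum_congr rfl (fun j hj => ?_)
    have hj' : j < s+1 := Finset.mem_range.mp hj
    have e : s+1-j = (s-j)+1 := by omega
    rw [h (cI (j+1)) (lt_of_le_of_lt (cI_le j) (by omega)), e,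
      h (dI ((s-j)+1)) (lt_of_le_of_lt (dI_le (s-j)) (by omega))]
  have eS2 : (∑ j ∈ Finset.range s, P (eI (j+1)) * P (fI (s+1-j)))
      = ∑ j ∈ Finset.range s, P' (eI (j+1)) * P' (fI (s+1-j)) := by
    refine Finset.sum_congr rfl (fun j hj => ?_)
    have hj' : j < s := Finset.mem_range.mp hj
    rw [h (eI (j+1)) (lt_of_le_of_lt (eI_le j) (by omega)),
      h (fI (s+1-j)) (lt_of_le_of_lt (fI_le (s+1-j)) (by omega))]
  rw [Al, Al, e1, e2, e3, eS1, eS2]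
  ring

lemma coords_eq_Ap {T : ℕ} {P P' : ℕ → F}
    (hoff : ∀ m, (∀ s, s < T → m ≠ 4*s+5) → P m = P' m)
    (hinv : ∀ s, s < T → Ap s P = Ap s P') : ∀ m, P m = P' m := by
  intro m
  induction m using Nat.strong_induction_on with
  | _ m ih =>
    by_cases hm : ∀ s, s < T → m ≠ 4*s+5
    · exact hoff m hm
    · push_neg at hm
      obtain ⟨s, hs, rfl⟩ := hm
      have h4 := Ap_congr (P := P) (P' := P') s (fun j hj => ih j hj)
      have h5 := hinv s hs
      linear_combination h4 - h5

lemma coords_eq_Al {T : ℕ} {P P' : ℕ → F}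
    (hoff : ∀ m, (∀ s, s < T → m ≠ 4*s+5) → P m = P' m)
    (hinv : ∀ s, s < T → Al s P = Al s P') : ∀ m, P m = P' m := by
  intro m
  induction m using Nat.strong_induction_on with
  | _ m ih =>
    by_cases hm : ∀ s, s < T → m ≠ 4*s+5
    · exact hoff m hm
    · push_neg at hm
      obtain ⟨s, hs, rfl⟩ := hm
      have h4 := Al_congr (P := P) (P' := P') s (fun j hj => ih j hj)
      have h5 := hinv s hs
      linear_combination h4 - h5
end PhiSec

section Count
open scoped Classical
set_option linter.unusedSectionVars false
variable {F : Type} [Field F] [Fintype F] {k : ℕ}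

lemma supp_card_le (hk : 2 ≤ k) {T : ℕ} (hT : 4*T+1 < k)
    (C : (DGraph k F).ConnectedComponent) :
    Nat.card C.supp ≤ 2 * (Fintype.card F)^(k - T) := by
  classical
  set Q : Fin k → Prop := fun m => ∃ s, s < T ∧ (m : ℕ) = 4*s+5 with hQ
  have hcard : Fintype.card {m : Fin k // Q m} = T := by
    have hbij : Function.Bijective
        (fun s : Fin T => (⟨⟨4*s.val+5, by omega⟩, ⟨s.val, s.isLt, rfl⟩⟩ :
          {m : Fin k // Q m})) := by
      constructor
      · intro a b hab
        have := congrArg (fun x => (x.val : ℕ)) hab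
        simp only at this
        exact Fin.ext (by omega)
      · rintro ⟨m, s, hs, hm⟩
        exact ⟨⟨s, hs⟩, Subtype.ext (Fin.ext hm.symm)⟩
    exact (Fintype.card_of_bijective hbij).symm.trans (Fintype.card_fin T)
  have hcompl : Fintype.card {m : Fin k // ¬ Q m} = k - T := by
    rw [Fintype.card_subtype_compl, hcard, Fintype.card_fin]
  set J : C.supp → Bool × ({m : Fin k // ¬ Q m} → F) := fun x =>
    (x.val.isLeft, fun m => Sum.elim (fun p => p m.val) (fun l => l m.val) x.val)
    with hJ
  have hJinj : Function.Injective J := by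
    rintro ⟨x, hx⟩ ⟨y, hy⟩ hxy
    have h1 : x.isLeft = y.isLeft := congrArg Prod.fst hxy
    have h2 := congrArg Prod.snd hxy
    simp only [hJ] at h1 h2
    match x, y with
    | Sum.inl p, Sum.inl p' =>
      have key : ∀ m, extD p m = extD p' m := by
        refine coords_eq_Ap (T := T) ?_ ?_
        · intro m hm
          by_cases hmk : m < k
          · rw [extD_lt hmk, extD_lt hmk]
            have hnq : ¬ Q ⟨m, hmk⟩ := by
              rintro ⟨s, hs, hms⟩
              exact hm s hs hms
            exact congrFun h2 ⟨⟨m, hmk⟩, hnq⟩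
          · rw [extD, extD]; rw [dif_neg hmk, dif_neg hmk]
        · intro s hs
          have h45 : 4*s+5 < k := by omega
          exact phi_supp (C := C) hx hy h45
      refine Subtype.ext (congrArg Sum.inl (funext fun i => ?_))
      have := key i.val
      rwa [extD_lt i.isLt, extD_lt i.isLt] at this
    | Sum.inr l, Sum.inr l' =>
      have key : ∀ m, extD l m = extD l' m := by
        refine coords_eq_Al (T := T) ?_ ?_
        · intro m hm
          by_cases hmk : m < k
          · rw [extD_lt hmk, extD_lt hmk]
            have hnq : ¬ Q ⟨m, hmk⟩ := by
              rintro ⟨s, hs, hms⟩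
              exact hm s hs hms
            exact congrFun h2 ⟨⟨m, hmk⟩, hnq⟩
          · rw [extD, extD]; rw [dif_neg hmk, dif_neg hmk]
        · intro s hs
          have h45 : 4*s+5 < k := by omega
          exact phi_supp (C := C) hx hy h45
      refine Subtype.ext (congrArg Sum.inr (funext fun i => ?_))
      have := key i.val
      rwa [extD_lt i.isLt, extD_lt i.isLt] at this
    | Sum.inl p, Sum.inr l' => simp at h1
    | Sum.inr l, Sum.inl p' => simp at h1
  calc Nat.card C.supp ≤ Nat.card (Bool × ({m : Fin k // ¬ Q m} → F)) :=
        Nat.card_le_card_of_injective J hJinj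
    _ = 2 * (Fintype.card F)^(k - T) := by
        rw [Nat.card_eq_fintype_card, Fintype.card_prod, Fintype.card_bool,
          Fintype.card_fun, hcompl]
end Count

/-- If `v` is the order and `e` the size of a connected component `CD(k,q)` of
`D(k,q)`, and `t = ⌊(k+2)/4⌋`, then
`e ≥ 2^(-1-1/(k-t+1)) * v^(1+1/(k-t+1))` as real numbers. -/
theorem statement13 (q k : ℕ) (hk : 2 ≤ k) (F : Type) [Field F] [Fintype F]
    (hF : Fintype.card F = q) (C : (DGraph k F).ConnectedComponent)
    (v e : ℕ) (hv : v = Nat.card C.supp)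
    (he : e = Nat.card ((DGraph k F).induce C.supp).edgeSet) :
    (2 : ℝ) ^ (-1 - 1 / ((k - (k + 2) / 4 + 1 : ℕ) : ℝ)) *
      (v : ℝ) ^ (1 + 1 / ((k - (k + 2) / 4 + 1 : ℕ) : ℝ)) ≤ (e : ℝ) := by
  have hq2 : 2 ≤ q := by
    rw [← hF]; exact Fintype.one_lt_card
  set N : ℕ := k - (k + 2) / 4 + 1 with hN
  set T : ℕ := (k + 2) / 4 - 1 with hT
  have hTk : 4 * T + 1 < k := by omega
  have hkT : k - T = N := by omega
  have hvle : v ≤ 2 * q ^ N := by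
    rw [hv, ← hF, ← hkT]
    exact supp_card_le hk hTk C
  have h2e : 2 * e = q * v := by
    rw [he, hv, ← hF]
    exact handshake hk C
  have hv1 : 1 ≤ v := by
    rw [hv]
    have : Nonempty C.supp := by
      obtain ⟨x, hx⟩ := C.exists_rep
      exact ⟨⟨x, by rwa [SimpleGraph.ConnectedComponent.mem_supp_iff]⟩⟩
    exact Nat.one_le_iff_ne_zero.mpr (Nat.card_pos).ne'
  -- real arithmetic
  set R : ℝ := ((N : ℕ) : ℝ) with hR
  have hR1 : (1:ℝ) ≤ R := by
    rw [hR]; exact_mod_cast Nat.one_le_iff_ne_zero.mpr (by omega)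
  have hRpos : (0:ℝ) < R := by linarith
  have hvpos : (0:ℝ) < (v:ℝ) := by exact_mod_cast hv1
  have hqpos : (0:ℝ) < (q:ℝ) := by
    have : (0:ℕ) < q := by omega
    exact_mod_cast this
  have hq2' : (0:ℝ) ≤ (q:ℝ) := le_of_lt hqpos
  have hcast : (v:ℝ) ≤ 2 * (q:ℝ) ^ (N:ℕ) := by exact_mod_cast hvle
  have hdiv : (v:ℝ)/2 ≤ (q:ℝ) ^ R := by
    rw [hR, Real.rpow_natCast]
    linarith
  have key : ((v:ℝ)/2) ^ ((1:ℝ)/R) ≤ (q:ℝ) := by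
    have h1 : ((v:ℝ)/2) ^ ((1:ℝ)/R) ≤ ((q:ℝ) ^ R) ^ ((1:ℝ)/R) :=
      Real.rpow_le_rpow (by positivity) hdiv (by positivity)
    have h2 : ((q:ℝ) ^ R) ^ ((1:ℝ)/R) = (q:ℝ) := by
      rw [← Real.rpow_mul hq2', mul_one_div, div_self (ne_of_gt hRpos), Real.rpow_one]
    rwa [h2] at h1
  have hLHS : (2:ℝ) ^ (-1 - 1/R) * (v:ℝ) ^ (1 + 1/R)
      = ((v:ℝ)/2) * ((v:ℝ)/2) ^ ((1:ℝ)/R) := by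
    have e1 : (-1 - 1/R : ℝ) = (-1) + (-(1/R)) := by ring
    have e2 : (1 + 1/R : ℝ) = 1 + 1/R := rfl
    rw [e1, Real.rpow_add (by norm_num : (0:ℝ) < 2), Real.rpow_add hvpos,
      Real.div_rpow (le_of_lt hvpos) (by norm_num : (0:ℝ) ≤ 2),
      Real.rpow_neg (by norm_num : (0:ℝ) ≤ 2), Real.rpow_neg (by norm_num : (0:ℝ) ≤ 2),
      Real.rpow_one, Real.rpow_one]
    have h2R : (0:ℝ) < (2:ℝ) ^ ((1:ℝ)/R) := Real.rpow_pos_of_pos (by norm_num) _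
    field_simp
  have h2e' : 2 * (e:ℝ) = (q:ℝ) * (v:ℝ) := by exact_mod_cast h2e
  calc (2:ℝ) ^ (-1 - 1/R) * (v:ℝ) ^ (1 + 1/R)
      = ((v:ℝ)/2) * ((v:ℝ)/2) ^ ((1:ℝ)/R) := hLHS
    _ ≤ ((v:ℝ)/2) * (q:ℝ) := by
        exact mul_le_mul_of_nonneg_left key (by positivity)
    _ = (e:ℝ) := by linarith
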